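/- arXiv:1701.04582 — 5 statements merged into one kernel-verified Lean document; each statement's English description precedes it below -/
import Mathlib

section
/- Let n ≥ 1, let A be a Γ-invariant bivariate copula, and let μ be a probability measure on [0,1]² whose distribution function is A. If μ((1/(n+1), n/(n+1)] × (1/(n+1), n/(n+1)]) > 0, then (1/n)Σ_{k=1}^n A(k/(n+1), k/(n+1)) > 1/4. -/
open MeasureTheory Set

/-- A bivariate copula on [0,1]², encoded as a function `ℝ → ℝ → ℝ` whose
defining properties are required on the unit square. -/
def IsCopula (C : ℝ → ℝ → ℝ) : Prop :=
  (∀ u ∈ Icc (0:ℝ) 1, C u 0 = 0) ∧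
  (∀ v ∈ Icc (0:ℝ) 1, C 0 v = 0) ∧
  (∀ u ∈ Icc (0:ℝ) 1, C u 1 = u) ∧
  (∀ v ∈ Icc (0:ℝ) 1, C 1 v = v) ∧
  (∀ u₁ u₂ v₁ v₂ : ℝ, u₁ ∈ Icc (0:ℝ) 1 → u₂ ∈ Icc (0:ℝ) 1 → v₁ ∈ Icc (0:ℝ) 1 →
    v₂ ∈ Icc (0:ℝ) 1 → u₁ ≤ u₂ → v₁ ≤ v₂ →
    0 ≤ C u₂ v₂ - C u₂ v₁ - C u₁ v₂ + C u₁ v₁) ∧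
  (∀ u ∈ Icc (0:ℝ) 1, ∀ v ∈ Icc (0:ℝ) 1, C u v ∈ Icc (0:ℝ) 1)

/-- Γ-invariance of a bivariate copula: invariance under the transposition and
the partial reflection ν₁. -/
def IsGammaInvariant (C : ℝ → ℝ → ℝ) : Prop :=
  ∀ u ∈ Icc (0:ℝ) 1, ∀ v ∈ Icc (0:ℝ) 1,
    C u v = C v u ∧ C u v = v - C (1 - u) v

/-- The unit square in ℝ². -/
def unitSquare : Set (ℝ × ℝ) := Icc (0:ℝ) 1 ×ˢ Icc (0:ℝ) 1

/-- `μ` is a measure on [0,1]² whose distribution function is `A`. -/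
def IsDistributionOf (μ : Measure (ℝ × ℝ)) (A : ℝ → ℝ → ℝ) : Prop :=
  ∀ u ∈ Icc (0:ℝ) 1, ∀ v ∈ Icc (0:ℝ) 1,
    μ (Icc (0:ℝ) u ×ˢ Icc (0:ℝ) v) = ENNReal.ofReal (A u v)

/-- The biconvex form `[C, A]` where `μ` is the measure associated with `A`. -/
noncomputable def biForm (μ : Measure (ℝ × ℝ)) (C : ℝ → ℝ → ℝ) : ℝ :=
  ∫ p in unitSquare, C p.1 p.2 ∂μ


/-- cross identity: A (1-u) u = u - A u u -/
lemma gamma_cross (A : ℝ → ℝ → ℝ) (hinv : IsGammaInvariant A)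
    {u : ℝ} (hu : u ∈ Icc (0:ℝ) 1) : A (1 - u) u = u - A u u := by
  have h1u : (1 - u) ∈ Icc (0:ℝ) 1 := ⟨by linarith [hu.2], by linarith [hu.1]⟩
  have e := (hinv (1 - u) h1u u hu).2
  rw [show (1:ℝ) - (1 - u) = u by ring] at e
  linarith

/-- reflected diagonal: A (1-u) (1-u) = 1 - 2u + A u u -/
lemma gamma_diag (A : ℝ → ℝ → ℝ) (hinv : IsGammaInvariant A)
    {u : ℝ} (hu : u ∈ Icc (0:ℝ) 1) : A (1 - u) (1 - u) = 1 - 2*u + A u u := by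
  have h1u : (1 - u) ∈ Icc (0:ℝ) 1 := ⟨by linarith [hu.2], by linarith [hu.1]⟩
  have e1 := (hinv (1 - u) h1u (1 - u) h1u).2
  rw [show (1:ℝ) - (1 - u) = u by ring] at e1
  have e2 := (hinv u hu (1 - u) h1u).1
  have e3 := gamma_cross A hinv hu
  linarith

/-- diagonal lower bound for Γ-invariant copulas -/
lemma diag_lb (A : ℝ → ℝ → ℝ) (hA : IsCopula A) (hinv : IsGammaInvariant A)
    {u : ℝ} (hu : u ∈ Icc (0:ℝ) 1) : u - 1/4 ≤ A u u := by
  obtain ⟨h0, h0', h1, h1', hinc, hrange⟩ := hA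
  have key : ∀ w : ℝ, w ∈ Icc (0:ℝ) 1 → w ≤ 1/2 → w - 1/4 ≤ A w w := by
    intro w hw hw2
    have h1w : (1 - w) ∈ Icc (0:ℝ) 1 := ⟨by linarith [hw.2], by linarith [hw.1]⟩
    have hrect := hinc w (1 - w) w (1 - w) hw h1w hw h1w (by linarith) (by linarith)
    have e1 := gamma_diag A hinv hw
    have e2 := gamma_cross A hinv hw
    have e3 := (hinv w hw (1 - w) h1w).1
    linarith
  rcases le_or_gt u (1/2) with h | h
  · exact key u hu h
  · have h1u : (1 - u) ∈ Icc (0:ℝ) 1 := ⟨by linarith [hu.2], by linarith [hu.1]⟩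
    have := key (1 - u) h1u (by linarith)
    have e1 := gamma_diag A hinv hu
    linarith

lemma rect_mass (A : ℝ → ℝ → ℝ) (hA : IsCopula A)
    (μ : Measure (ℝ × ℝ)) [IsProbabilityMeasure μ] (hdist : IsDistributionOf μ A)
    {a b : ℝ} (ha : a ∈ Icc (0:ℝ) 1) (hb : b ∈ Icc (0:ℝ) 1) (hab : a ≤ b) :
    (μ (Ioc a b ×ˢ Ioc a b)).toReal = A b b + A a a - A a b - A b a := by
  have hmI : MeasurableSet (Ioc a b) := measurableSet_Ioc
  have hdisj : Disjoint (Icc (0:ℝ) a) (Ioc a b) := by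
    rw [Set.disjoint_left]
    intro x hx hx'
    exact absurd hx.2 (not_le.mpr hx'.1)
  have hsplit : Icc (0:ℝ) b = Icc (0:ℝ) a ∪ Ioc a b :=
    (Set.Icc_union_Ioc_eq_Icc ha.1 hab).symm
  have hdisj1 : Disjoint (Icc (0:ℝ) a ×ˢ Icc (0:ℝ) b) (Ioc a b ×ˢ Icc (0:ℝ) b) := by
    rw [Set.disjoint_left]
    rintro ⟨x, y⟩ ⟨hx, -⟩ ⟨hx', -⟩
    exact absurd hx.2 (not_le.mpr hx'.1)
  have hdisj2 : Disjoint (Ioc a b ×ˢ Icc (0:ℝ) a) (Ioc a b ×ˢ Ioc a b) := by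
    rw [Set.disjoint_left]
    rintro ⟨x, y⟩ ⟨-, hy⟩ ⟨-, hy'⟩
    exact absurd hy.2 (not_le.mpr hy'.1)
  have hdisj3 : Disjoint (Icc (0:ℝ) a ×ˢ Icc (0:ℝ) a) (Ioc a b ×ˢ Icc (0:ℝ) a) := by
    rw [Set.disjoint_left]
    rintro ⟨x, y⟩ ⟨hx, -⟩ ⟨hx', -⟩
    exact absurd hx.2 (not_le.mpr hx'.1)
  have m1 : μ (Icc (0:ℝ) b ×ˢ Icc (0:ℝ) b)
      = μ (Icc (0:ℝ) a ×ˢ Icc (0:ℝ) b) + μ (Ioc a b ×ˢ Icc (0:ℝ) b) := by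
    rw [show Icc (0:ℝ) b ×ˢ Icc (0:ℝ) b
        = Icc (0:ℝ) a ×ˢ Icc (0:ℝ) b ∪ Ioc a b ×ˢ Icc (0:ℝ) b by
      rw [← Set.union_prod, ← hsplit]]
    exact measure_union hdisj1 (hmI.prod measurableSet_Icc)
  have m2 : μ (Ioc a b ×ˢ Icc (0:ℝ) b)
      = μ (Ioc a b ×ˢ Icc (0:ℝ) a) + μ (Ioc a b ×ˢ Ioc a b) := by
    rw [show Ioc a b ×ˢ Icc (0:ℝ) b
        = Ioc a b ×ˢ Icc (0:ℝ) a ∪ Ioc a b ×ˢ Ioc a b by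
      rw [← Set.prod_union, ← hsplit]]
    exact measure_union hdisj2 (hmI.prod hmI)
  have m3 : μ (Icc (0:ℝ) b ×ˢ Icc (0:ℝ) a)
      = μ (Icc (0:ℝ) a ×ˢ Icc (0:ℝ) a) + μ (Ioc a b ×ˢ Icc (0:ℝ) a) := by
    rw [show Icc (0:ℝ) b ×ˢ Icc (0:ℝ) a
        = Icc (0:ℝ) a ×ˢ Icc (0:ℝ) a ∪ Ioc a b ×ˢ Icc (0:ℝ) a by
      rw [← Set.union_prod, ← hsplit]]
    exact measure_union hdisj3 (hmI.prod measurableSet_Icc)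
  have key : μ (Icc (0:ℝ) b ×ˢ Icc (0:ℝ) b) + μ (Icc (0:ℝ) a ×ˢ Icc (0:ℝ) a)
      = μ (Icc (0:ℝ) a ×ˢ Icc (0:ℝ) b) + μ (Icc (0:ℝ) b ×ˢ Icc (0:ℝ) a)
        + μ (Ioc a b ×ˢ Ioc a b) := by
    rw [m1, m2, m3]; ring
  rw [hdist b hb b hb, hdist a ha a ha, hdist a ha b hb, hdist b hb a ha] at key
  obtain ⟨-, -, -, -, -, hrange⟩ := hA
  have hbb := (hrange b hb b hb).1
  have haa := (hrange a ha a ha).1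
  have hab' := (hrange a ha b hb).1
  have hba := (hrange b hb a ha).1
  have hfin : μ (Ioc a b ×ˢ Ioc a b) ≠ ⊤ := measure_ne_top μ _
  have := congrArg ENNReal.toReal key
  rw [ENNReal.toReal_add ENNReal.ofReal_ne_top ENNReal.ofReal_ne_top,
      ENNReal.toReal_add (by finiteness) hfin,
      ENNReal.toReal_add ENNReal.ofReal_ne_top ENNReal.ofReal_ne_top,
      ENNReal.toReal_ofReal hbb, ENNReal.toReal_ofReal haa,
      ENNReal.toReal_ofReal hab', ENNReal.toReal_ofReal hba] at this
  linarith

theorem stmt15 (n : ℕ) (hn : 1 ≤ n) (A : ℝ → ℝ → ℝ) (hA : IsCopula A)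
    (hinv : IsGammaInvariant A)
    (μ : MeasureTheory.Measure (ℝ × ℝ))
    (hμ : MeasureTheory.IsProbabilityMeasure μ) (hdist : IsDistributionOf μ A)
    (hpos : 0 < μ (Ioc ((1:ℝ)/((n:ℝ)+1)) ((n:ℝ)/((n:ℝ)+1)) ×ˢ
        Ioc ((1:ℝ)/((n:ℝ)+1)) ((n:ℝ)/((n:ℝ)+1)))) :
    (1/(n:ℝ)) * (∑ k : Fin n,
      A (((k.val:ℝ)+1)/((n:ℝ)+1)) (((k.val:ℝ)+1)/((n:ℝ)+1))) > 1/4 := by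
  have hn0 : (0:ℝ) < n := by exact_mod_cast hn
  have hn1 : (0:ℝ) < (n:ℝ) + 1 := by linarith
  set a : ℝ := 1 / ((n:ℝ) + 1) with ha_def
  set b : ℝ := (n:ℝ) / ((n:ℝ) + 1) with hb_def
  have ha : a ∈ Icc (0:ℝ) 1 := by
    constructor
    · positivity
    · rw [ha_def, div_le_one hn1]; linarith
  have hb : b ∈ Icc (0:ℝ) 1 := by
    constructor
    · positivity
    · rw [hb_def, div_le_one hn1]; linarith
  have hab : a ≤ b := by
    rw [ha_def, hb_def, div_le_div_iff_of_pos_right hn1]; exact_mod_cast hn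
  have hb1a : b = 1 - a := by
    rw [ha_def, hb_def]; field_simp; ring
  -- strict diagonal bound at a
  have hrm := rect_mass A hA μ hdist ha hb hab
  have hPpos : (0:ℝ) < (μ (Ioc a b ×ˢ Ioc a b)).toReal :=
    ENNReal.toReal_pos hpos.ne' (measure_ne_top μ _)
  have hstrict : a - 1/4 < A a a := by
    have e1 : A b b = 1 - 2*a + A a a := by rw [hb1a]; exact gamma_diag A hinv ha
    have e2 : A b a = a - A a a := by rw [hb1a]; exact gamma_cross A hinv ha
    have h1a : (1 - a) ∈ Icc (0:ℝ) 1 := ⟨by linarith [ha.2], by linarith [ha.1]⟩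
    have e3 : A a b = A b a := by
      rw [hb1a]; exact (hinv a ha (1 - a) h1a).1
    rw [hrm] at hPpos
    linarith
  -- the sum
  rw [Fin.sum_univ_eq_sum_range (fun k => A (((k:ℝ)+1)/((n:ℝ)+1)) (((k:ℝ)+1)/((n:ℝ)+1))) n]
  set f : ℕ → ℝ := fun k => A (((k:ℝ)+1)/((n:ℝ)+1)) (((k:ℝ)+1)/((n:ℝ)+1)) with hf_def
  have hrefl : ∑ k ∈ Finset.range n, f (n - 1 - k) = ∑ k ∈ Finset.range n, f k :=
    Finset.sum_range_reflect f n
  have hmem : ∀ k, k ∈ Finset.range n → ((k:ℝ)+1)/((n:ℝ)+1) ∈ Icc (0:ℝ) 1 := by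
    intro k hk
    have hk' : k < n := Finset.mem_range.mp hk
    constructor
    · positivity
    · rw [div_le_one hn1]
      have : (k:ℝ) + 1 ≤ (n:ℝ) := by exact_mod_cast Nat.succ_le_of_lt hk'
      linarith
  have hterm : ∀ k ∈ Finset.range n, f k + f (n - 1 - k) = 1 - 2*(((k:ℝ)+1)/((n:ℝ)+1)) + 2 * f k := by
    intro k hk
    have hk' : k < n := Finset.mem_range.mp hk
    have hcast : ((n - 1 - k : ℕ) : ℝ) + 1 = (n:ℝ) - (k:ℝ) := by
      have h1 : n - 1 - k = n - (k + 1) := by omega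
      have h2 : k + 1 ≤ n := hk'
      rw [h1, Nat.cast_sub h2]
      push_cast
      ring
    have hrefl_arg : ((n - 1 - k : ℕ) : ℝ) + 1 = ((n:ℝ)+1) * (1 - ((k:ℝ)+1)/((n:ℝ)+1)) := by
      rw [hcast]; field_simp; ring
    have harg : (((n - 1 - k : ℕ) : ℝ) + 1)/((n:ℝ)+1) = 1 - ((k:ℝ)+1)/((n:ℝ)+1) := by
      rw [hrefl_arg]; field_simp
    have := gamma_diag A hinv (hmem k hk)
    simp only [hf_def]
    rw [harg, this]
    ring
  have hlow : ∀ k ∈ Finset.range n, (1:ℝ)/2 ≤ f k + f (n - 1 - k) := by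
    intro k hk
    rw [hterm k hk]
    have hlb := diag_lb A hA hinv (hmem k hk)
    simp only [hf_def]
    linarith [hlb]
  have h0mem : 0 ∈ Finset.range n := Finset.mem_range.mpr hn
  have h0strict : (1:ℝ)/2 < f 0 + f (n - 1 - 0) := by
    rw [hterm 0 h0mem]
    have : f 0 = A a a := by
      simp only [hf_def, ha_def]
      norm_num
    rw [this]
    have : ((0:ℕ):ℝ) + 1 = 1 := by norm_num
    rw [this]
    rw [← ha_def]
    linarith
  have hsum_lt : ∑ k ∈ Finset.range n, ((1:ℝ)/2)
      < ∑ k ∈ Finset.range n, (f k + f (n - 1 - k)) :=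
    Finset.sum_lt_sum hlow ⟨0, h0mem, h0strict⟩
  rw [Finset.sum_const, Finset.card_range, Finset.sum_add_distrib, hrefl] at hsum_lt
  have hS : (n:ℝ)/2 < 2 * ∑ k ∈ Finset.range n, f k := by
    have h2 : n • ((1:ℝ)/2) = (n:ℝ)/2 := by
      rw [nsmul_eq_mul]; ring
    rw [h2] at hsum_lt
    linarith
  rw [gt_iff_lt, show (1:ℝ)/4 = (1:ℝ)/4 from rfl]
  rw [show (1/(n:ℝ)) * (∑ k ∈ Finset.range n, f k) = (∑ k ∈ Finset.range n, f k) / n by ring]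
  rw [lt_div_iff₀ hn0]
  linarith
end

section
/- Let A be a Γ-invariant bivariate copula and let μ be a probability measure on [0,1]² whose distribution function is A. Then there exists n₀ ≥ 2 such that for every n ≥ n₀ one has (1/n)Σ_{k=1}^n A(k/(n+1), k/(n+1)) > 1/4, i.e. ⟨M,A⟩_n > 1/4 for all sufficiently large sample sizes n. -/
open MeasureTheory Set

lemma aux_nat_sum : ∀ N : ℕ, N * N ≤ 4 * (∑ k ∈ Finset.range N, (2 * k - N)) + 3 * N := by
  intro N
  induction N using Nat.twoStepInduction with
  | zero => simp
  | one => simp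
  | more N ih _ =>
    have hstep : (∑ k ∈ Finset.range (N+2), (2 * k - (N+2)))
        = (∑ k ∈ Finset.range N, (2 * k - N)) + N := by
      rw [Finset.sum_range_succ']
      have h1 : ∀ k, 2 * (k+1) - (N+2) = 2*k - N := fun k => by omega
      simp only [h1]
      rw [Finset.sum_range_succ]
      omega
    rw [hstep]
    nlinarith [ih]

-- sum of |2(k+1)-(n+1)| over k < n, as naturals
lemma aux_d_sum (n : ℕ) :
    (n+1)*(n+1) ≤ 2 * (∑ k ∈ Finset.range n, ((2*(k+1) - (n+1)) + ((n+1) - 2*(k+1)))) + 3*(n+1) := by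
  have hsplit : (∑ k ∈ Finset.range n, ((2*(k+1) - (n+1)) + ((n+1) - 2*(k+1))))
      = (∑ k ∈ Finset.range n, (2*(k+1) - (n+1))) + (∑ k ∈ Finset.range n, ((n+1) - 2*(k+1))) :=
    Finset.sum_add_distrib
  have hrefl : (∑ k ∈ Finset.range n, ((n+1) - 2*(k+1)))
      = (∑ k ∈ Finset.range n, (2*(k+1) - (n+1))) := by
    rw [← Finset.sum_range_reflect (fun k => 2*(k+1) - (n+1)) n]
    apply Finset.sum_congr rfl
    intro j hj
    have := Finset.mem_range.mp hj
    omega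
  have hF : (∑ k ∈ Finset.range (n+1), (2*k - (n+1)))
      = ∑ k ∈ Finset.range n, (2*(k+1) - (n+1)) := by
    rw [Finset.sum_range_succ']
    omega
  have := aux_nat_sum (n+1)
  rw [hF] at this
  omega


lemma main_sum (A : ℝ → ℝ → ℝ)
    (hlow : ∀ u ∈ Icc (0:ℝ) 1, 2*u - 1 ≤ A u u)
    (hnn : ∀ u ∈ Icc (0:ℝ) 1, 0 ≤ A u u)
    (hP14 : ∀ u ∈ Icc (0:ℝ) 1, 1/4 ≤ A u u + A (1-u) (1-u))
    (n : ℕ) (hn : 100 ≤ n) :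
    (n:ℝ)/4 < ∑ k ∈ Finset.range n, A (((k:ℝ)+1)/((n:ℝ)+1)) (((k:ℝ)+1)/((n:ℝ)+1)) := by
  have hc : (0:ℝ) < (n:ℝ)+1 := by positivity
  set c : ℝ := (n:ℝ)+1 with hcdef
  set u : ℕ → ℝ := fun k => ((k:ℝ)+1)/c with hudef
  set S : ℝ := ∑ k ∈ Finset.range n, A (u k) (u k) with hSdef
  set d : ℕ → ℕ := fun k => (2*(k+1) - (n+1)) + ((n+1) - 2*(k+1)) with hddef
  set B : Finset ℕ := Finset.Icc (n/2 - 2) (n/2 + 2) with hBdef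
  have huIcc : ∀ k ∈ Finset.range n, u k ∈ Icc (0:ℝ) 1 := by
    intro k hk
    have hk' := Finset.mem_range.mp hk
    constructor
    · positivity
    · rw [div_le_one hc]
      have : (k:ℝ) ≤ (n:ℝ) := by exact_mod_cast hk'.le
      linarith
  have hwIcc : ∀ k ∈ Finset.range n, 1 - u k ∈ Icc (0:ℝ) 1 := by
    intro k hk
    have hk' := Finset.mem_range.mp hk
    have h0 : 0 < u k := by positivity
    have h1 : u k ≤ 1 := (huIcc k hk).2
    constructor <;> [linarith; linarith]
  -- reflection
  have hrefl : ∑ k ∈ Finset.range n, A (1 - u k) (1 - u k) = S := by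
    rw [hSdef, ← Finset.sum_range_reflect (fun k => A (u k) (u k)) n]
    apply Finset.sum_congr rfl
    intro j hj
    have hj' := Finset.mem_range.mp hj
    have harg : u (n - 1 - j) = 1 - u j := by
      have he : (n - 1 - j : ℕ) = n - (j+1) := by omega
      rw [hudef]
      simp only [he]
      rw [Nat.cast_sub (by omega : j+1 ≤ n)]
      push_cast
      field_simp
      ring
    rw [harg]
  -- pointwise bound
  have hpoint : ∀ k ∈ Finset.range n,
      (if k ∈ B then (1/4:ℝ) else (d k : ℝ)/c) ≤ A (u k) (u k) + A (1 - u k) (1 - u k) := by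
    intro k hk
    split
    · exact hP14 (u k) (huIcc k hk)
    · have hk' := Finset.mem_range.mp hk
      rcases le_or_gt (n+1) (2*(k+1)) with h | h
      · have hd1 : (d k : ℝ) = 2*((k:ℝ)+1) - ((n:ℝ)+1) := by
          have he : d k = 2*(k+1) - (n+1) := by simp only [hddef]; omega
          rw [he, Nat.cast_sub (by omega : n+1 ≤ 2*(k+1))]
          push_cast; ring
        have hq : (d k : ℝ)/c = 2 * u k - 1 := by
          rw [hd1, hudef]; field_simp; rw [hcdef]
        rw [hq]
        have := hlow (u k) (huIcc k hk)
        have := hnn (1 - u k) (hwIcc k hk)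
        linarith
      · have hd1 : (d k : ℝ) = ((n:ℝ)+1) - 2*((k:ℝ)+1) := by
          have he : d k = (n+1) - 2*(k+1) := by simp only [hddef]; omega
          rw [he, Nat.cast_sub (by omega : 2*(k+1) ≤ n+1)]
          push_cast; ring
        have hq : (d k : ℝ)/c = 2 * (1 - u k) - 1 := by
          rw [hd1, hudef]; field_simp; ring
        rw [hq]
        have := hlow (1 - u k) (hwIcc k hk)
        have := hnn (u k) (huIcc k hk)
        linarith
  -- sum of pairs equals 2S
  have hS2 : ∑ k ∈ Finset.range n, (A (u k) (u k) + A (1 - u k) (1 - u k)) = 2 * S := by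
    rw [Finset.sum_add_distrib, hrefl, hSdef]; ring
  have hchain : ∑ k ∈ Finset.range n, (if k ∈ B then (1/4:ℝ) else (d k : ℝ)/c) ≤ 2 * S := by
    rw [← hS2]; exact Finset.sum_le_sum hpoint
  -- decompose the φ-sum
  have hphi : ∑ k ∈ Finset.range n, (if k ∈ B then (1/4:ℝ) else (d k : ℝ)/c)
      = (∑ k ∈ Finset.range n, (d k : ℝ)/c)
        + ∑ k ∈ Finset.range n, (if k ∈ B then (1/4:ℝ) - (d k : ℝ)/c else 0) := by
    rw [← Finset.sum_add_distrib]
    apply Finset.sum_congr rfl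
    intro k _
    split <;> ring
  have hBsub : B ⊆ Finset.range n := by
    intro k hk
    rw [hBdef, Finset.mem_Icc] at hk
    rw [Finset.mem_range]
    omega
  have hite : ∑ k ∈ Finset.range n, (if k ∈ B then (1/4:ℝ) - (d k : ℝ)/c else 0)
      = ∑ k ∈ B, ((1/4:ℝ) - (d k : ℝ)/c) := by
    rw [Finset.sum_ite_mem, Finset.inter_eq_right.mpr hBsub]
  have hcard : B.card = 5 := by
    rw [hBdef, Nat.card_Icc]; omega
  have hBsum : 5 * ((1/4:ℝ) - 5/c) ≤ ∑ k ∈ B, ((1/4:ℝ) - (d k : ℝ)/c) := by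
    have hpt : ∀ k ∈ B, (1/4:ℝ) - 5/c ≤ (1/4:ℝ) - (d k : ℝ)/c := by
      intro k hk
      rw [hBdef, Finset.mem_Icc] at hk
      have hd5 : d k ≤ 5 := by simp only [hddef]; omega
      have hd5' : (d k : ℝ) ≤ 5 := by exact_mod_cast hd5
      have : (d k : ℝ)/c ≤ 5/c := by gcongr
      linarith
    calc 5 * ((1/4:ℝ) - 5/c) = B.card • ((1/4:ℝ) - 5/c) := by rw [hcard]; simp
      _ = ∑ _k ∈ B, ((1/4:ℝ) - 5/c) := by rw [Finset.sum_const]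
      _ ≤ _ := Finset.sum_le_sum hpt
  -- total d-sum lower bound, cast to ℝ
  have hDR : c*c ≤ 2*((∑ k ∈ Finset.range n, d k : ℕ):ℝ) + 3*c := by
    have h := aux_d_sum n
    have h' : (n+1)*(n+1) ≤ 2*(∑ k ∈ Finset.range n, d k) + 3*(n+1) := by
      simp only [hddef]; exact h
    rw [hcdef]
    exact_mod_cast h'
  have hcast : ((∑ k ∈ Finset.range n, d k : ℕ):ℝ) = ∑ k ∈ Finset.range n, (d k:ℝ) := by
    push_cast; rfl
  rw [hcast] at hDR
  set D : ℝ := ∑ k ∈ Finset.range n, (d k:ℝ) with hDdef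
  have hsumdiv : ∑ k ∈ Finset.range n, (d k:ℝ)/c = D/c := by
    rw [hDdef, Finset.sum_div]
  rw [hphi, hite, hsumdiv] at hchain
  have hfin : D/c + 5*((1/4:ℝ) - 5/c) ≤ 2*S := by linarith
  have hmul : (D/c + 5*((1/4:ℝ) - 5/c)) * c = D + (5/4)*c - 25 := by
    field_simp; ring
  by_contra hcon
  push_neg at hcon
  have h1 : (D/c + 5*((1/4:ℝ) - 5/c)) * c ≤ (2*S)*c :=
    mul_le_mul_of_nonneg_right hfin hc.le
  rw [hmul] at h1
  have h3 : (2*S)*c ≤ ((n:ℝ)/2)*c := mul_le_mul_of_nonneg_right (by linarith) hc.le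
  have hn' : (100:ℝ) ≤ (n:ℝ) := by exact_mod_cast hn
  rw [hcdef] at h1 h3 hDR
  nlinarith [h1, h3, hDR, hn']


theorem stmt16 (A : ℝ → ℝ → ℝ) (hA : IsCopula A) (hinv : IsGammaInvariant A)
    (μ : MeasureTheory.Measure (ℝ × ℝ))
    (hμ : MeasureTheory.IsProbabilityMeasure μ) (hdist : IsDistributionOf μ A) :
    ∃ n₀ : ℕ, 2 ≤ n₀ ∧ ∀ n : ℕ, n₀ ≤ n →
      (1/(n:ℝ)) * (∑ k : Fin n,
        A (((k.val:ℝ)+1)/((n:ℝ)+1)) (((k.val:ℝ)+1)/((n:ℝ)+1))) > 1/4 := by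
  clear hμ hdist μ
  obtain ⟨h00, h00', h1, h1', h2, hbox⟩ := hA
  have h0m : (0:ℝ) ∈ Icc (0:ℝ) 1 := by norm_num
  have h1m : (1:ℝ) ∈ Icc (0:ℝ) 1 := by norm_num
  have hhm : (1/2:ℝ) ∈ Icc (0:ℝ) 1 := by norm_num
  have hhalf : A (1/2) (1/2) = 1/4 := by
    have := (hinv (1/2) hhm (1/2) hhm).2
    norm_num at this
    linarith
  have hmono1 : ∀ v ∈ Icc (0:ℝ) 1, ∀ u₁ ∈ Icc (0:ℝ) 1, ∀ u₂ ∈ Icc (0:ℝ) 1,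
      u₁ ≤ u₂ → A u₁ v ≤ A u₂ v := by
    intro v hv u₁ hu₁ u₂ hu₂ h
    have := h2 u₁ u₂ 0 v hu₁ hu₂ h0m hv h hv.1
    rw [h00 u₁ hu₁, h00 u₂ hu₂] at this
    linarith
  have hmono2 : ∀ u ∈ Icc (0:ℝ) 1, ∀ v₁ ∈ Icc (0:ℝ) 1, ∀ v₂ ∈ Icc (0:ℝ) 1,
      v₁ ≤ v₂ → A u v₁ ≤ A u v₂ := by
    intro u hu v₁ hv₁ v₂ hv₂ h
    have := h2 0 u v₁ v₂ h0m hu hv₁ hv₂ hu.1 h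
    rw [h00' v₁ hv₁, h00' v₂ hv₂] at this
    linarith
  have hlow : ∀ u ∈ Icc (0:ℝ) 1, 2*u - 1 ≤ A u u := by
    intro u hu
    have := h2 u 1 u 1 hu h1m hu h1m hu.2 hu.2
    rw [h1 u hu, h1' u hu, h1 1 h1m] at this
    linarith
  have hnn : ∀ u ∈ Icc (0:ℝ) 1, 0 ≤ A u u := fun u hu => (hbox u hu u hu).1
  have hP14 : ∀ u ∈ Icc (0:ℝ) 1, 1/4 ≤ A u u + A (1-u) (1-u) := by
    intro u hu
    have hu' : (1:ℝ) - u ∈ Icc (0:ℝ) 1 := by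
      constructor <;> [linarith [hu.2]; linarith [hu.1]]
    rcases le_total u (1/2) with h | h
    · have hh : (1/2:ℝ) ≤ 1 - u := by linarith
      have s1 : A (1/2) (1/2) ≤ A (1-u) (1/2) := hmono1 (1/2) hhm (1/2) hhm (1-u) hu' hh
      have s2 : A (1-u) (1/2) ≤ A (1-u) (1-u) := hmono2 (1-u) hu' (1/2) hhm (1-u) hu' hh
      have := hnn u hu
      linarith [hhalf ▸ s1]
    · have s1 : A (1/2) (1/2) ≤ A u (1/2) := hmono1 (1/2) hhm (1/2) hhm u hu h
      have s2 : A u (1/2) ≤ A u u := hmono2 u hu (1/2) hhm u hu h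
      have := hnn (1-u) hu'
      linarith [hhalf ▸ s1]
  refine ⟨100, by norm_num, ?_⟩
  intro n hn
  have hr : (∑ k : Fin n, A (((k.val:ℝ)+1)/((n:ℝ)+1)) (((k.val:ℝ)+1)/((n:ℝ)+1)))
      = ∑ k ∈ Finset.range n, A (((k:ℝ)+1)/((n:ℝ)+1)) (((k:ℝ)+1)/((n:ℝ)+1)) :=
    Fin.sum_univ_eq_sum_range (fun k : ℕ => A (((k:ℝ)+1)/((n:ℝ)+1)) (((k:ℝ)+1)/((n:ℝ)+1))) n
  rw [gt_iff_lt, hr]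
  have hS := main_sum A hlow hnn hP14 n hn
  have hn0 : (0:ℝ) < n := by
    have : 0 < n := by omega
    exact_mod_cast this
  rw [div_mul_eq_mul_div, one_mul, lt_div_iff₀ hn0]
  linarith
end

section
/- Let n ≥ 1, let A be a Γ-invariant bivariate copula with ⟨M,A⟩_n := (1/n)Σ_{k=1}^n A(k/(n+1), k/(n+1)) > 1/4, and let σ be a permutation of {1,…,n}. Define the estimator κ̂ := (⟨C,A⟩_n − 1/4)/(⟨M,A⟩_n − 1/4), where ⟨C,A⟩_n := (1/n)Σ_{k=1}^n A(k/(n+1), σ(k)/(n+1)). Then −1 ≤ κ̂ ≤ 1; moreover κ̂ = 1 when σ is the identity permutation, and κ̂ = −1 when σ(k) = n+1−k for all k. -/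
open MeasureTheory Set

lemma rearrange_max' {n : ℕ} (x : Fin n → ℝ) (f : ℝ → ℝ → ℝ)
    (hs : ∀ i j k l : Fin n, i ≤ j → k ≤ l →
      f (x i) (x l) + f (x j) (x k) ≤ f (x i) (x k) + f (x j) (x l)) :
    ∀ m : ℕ, ∀ σ : Equiv.Perm (Fin n), σ.support.card ≤ m →
      ∑ k, f (x k) (x (σ k)) ≤ ∑ k, f (x k) (x k) := by
  intro m
  induction m with
  | zero =>
    intro σ hσ
    have h0 : σ.support.card = 0 := Nat.le_zero.mp hσ
    have : σ = 1 := by rwa [Equiv.Perm.card_support_eq_zero] at h0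
    subst this; simp
  | succ m ih =>
    intro σ hσ
    by_cases h1 : σ = 1
    · subst h1; simp
    · have hne : σ.support.Nonempty := by
        rw [Finset.nonempty_iff_ne_empty, Ne, Equiv.Perm.support_eq_empty_iff]; exact h1
      set k := σ.support.max' hne with hk
      have hkmem : k ∈ σ.support := σ.support.max'_mem hne
      have hkne : σ k ≠ k := Equiv.Perm.mem_support.1 hkmem
      have hσk_mem : σ k ∈ σ.support := Equiv.Perm.apply_mem_support.2 hkmem
      have hσk_lt : σ k < k := lt_of_le_of_ne (σ.support.le_max' _ hσk_mem) hkne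
      set j := σ⁻¹ k with hj
      have hjk : σ j = k := by simp [hj]
      have hjne : j ≠ k := by
        intro h; rw [h] at hjk; exact hkne hjk
      have hjmem : j ∈ σ.support := by
        rw [Equiv.Perm.mem_support, hjk]; exact fun h => hjne h.symm
      have hjlt : j < k := lt_of_le_of_ne (σ.support.le_max' _ hjmem) hjne
      set σ' := σ * Equiv.swap k j with hσ'
      have hσ'k : σ' k = k := by
        simp [hσ', Equiv.Perm.mul_apply, Equiv.swap_apply_left, hjk]
      have hσ'j : σ' j = σ k := by
        simp [hσ', Equiv.Perm.mul_apply, Equiv.swap_apply_right]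
      have hσ'other : ∀ i, i ≠ k → i ≠ j → σ' i = σ i := by
        intro i h1 h2
        simp [hσ', Equiv.Perm.mul_apply, Equiv.swap_apply_of_ne_of_ne h1 h2]
      have hsub : σ'.support ⊆ σ.support.erase k := by
        intro i hi
        rw [Equiv.Perm.mem_support] at hi
        rw [Finset.mem_erase]
        have hik : i ≠ k := by intro h; rw [h] at hi; exact hi hσ'k
        refine ⟨hik, ?_⟩
        rw [Equiv.Perm.mem_support]
        by_cases hij : i = j
        · rw [hij, hjk]; exact fun h => hjne h.symm
        · rw [← hσ'other i hik hij]; exact hi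
      have hcard : σ'.support.card ≤ m := by
        have h1 := Finset.card_le_card hsub
        have h2 := Finset.card_erase_of_mem hkmem
        omega
      have hrec := ih σ' hcard
      have hdiff : ∑ i, f (x i) (x (σ i)) ≤ ∑ i, f (x i) (x (σ' i)) := by
        have key : f (x j) (x k) + f (x k) (x (σ k)) ≤ f (x j) (x (σ k)) + f (x k) (x k) :=
          hs j k (σ k) k (le_of_lt hjlt) (le_of_lt hσk_lt)
        have e : ∀ (τ : Equiv.Perm (Fin n)),
            ∑ i, f (x i) (x (τ i)) =
              ∑ i ∈ Finset.univ \ ({j, k} : Finset (Fin n)), f (x i) (x (τ i))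
                + (f (x j) (x (τ j)) + f (x k) (x (τ k))) := by
          intro τ
          have hp := Finset.sum_pair (f := fun i => f (x i) (x (τ i))) hjne
          rw [← hp, Finset.sum_sdiff (Finset.subset_univ _)]
        rw [e σ, e σ']
        have hcongr : ∑ i ∈ Finset.univ \ ({j, k} : Finset (Fin n)), f (x i) (x (σ i))
            = ∑ i ∈ Finset.univ \ ({j, k} : Finset (Fin n)), f (x i) (x (σ' i)) := by
          apply Finset.sum_congr rfl
          intro i hi
          simp only [Finset.mem_sdiff, Finset.mem_insert, Finset.mem_singleton] at hi
          rw [hσ'other i (fun h => hi.2 (Or.inr h)) (fun h => hi.2 (Or.inl h))]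
        rw [hσ'j, hσ'k, hjk]
        linarith
      exact le_trans hdiff hrec


lemma gauss_sum_fin (n : ℕ) : ∑ k : Fin n, ((k.val:ℝ)+1) = n*(n+1)/2 := by
  induction n with
  | zero => simp
  | succ n ih =>
    rw [Fin.sum_univ_castSucc]
    simp only [Fin.coe_castSucc, Fin.val_last, ih]
    push_cast
    ring

theorem stmt17_aux (n : ℕ) (hn : 1 ≤ n) (A : ℝ → ℝ → ℝ)
    (hA2 : ∀ u₁ u₂ v₁ v₂ : ℝ, u₁ ∈ Icc (0:ℝ) 1 → u₂ ∈ Icc (0:ℝ) 1 → v₁ ∈ Icc (0:ℝ) 1 →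
      v₂ ∈ Icc (0:ℝ) 1 → u₁ ≤ u₂ → v₁ ≤ v₂ →
      0 ≤ A u₂ v₂ - A u₂ v₁ - A u₁ v₂ + A u₁ v₁)
    (hinv : ∀ u ∈ Icc (0:ℝ) 1, ∀ v ∈ Icc (0:ℝ) 1, A u v = v - A (1 - u) v)
    (σ : Equiv.Perm (Fin n))
    (MA CA κ : ℝ)
    (hMA : MA = (1/(n:ℝ)) * ∑ k : Fin n,
      A (((k.val:ℝ)+1)/((n:ℝ)+1)) (((k.val:ℝ)+1)/((n:ℝ)+1)))
    (hCA : CA = (1/(n:ℝ)) * ∑ k : Fin n,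
      A (((k.val:ℝ)+1)/((n:ℝ)+1)) ((((σ k).val:ℝ)+1)/((n:ℝ)+1)))
    (hM : MA > 1/4)
    (hκ : κ = (CA - 1/4) / (MA - 1/4)) :
    (-1 ≤ κ ∧ κ ≤ 1) ∧
    (σ = Equiv.refl (Fin n) → κ = 1) ∧
    ((∀ k : Fin n, (σ k).val + 1 = n - k.val) → κ = -1) := by
  have hn0 : (0:ℝ) < n := by exact_mod_cast hn
  have hnp : (0:ℝ) < (n:ℝ)+1 := by positivity
  set x : Fin n → ℝ := fun k => ((k.val:ℝ)+1)/((n:ℝ)+1) with hx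
  have hxmem : ∀ k : Fin n, x k ∈ Icc (0:ℝ) 1 := by
    intro k
    constructor
    · positivity
    · rw [div_le_one hnp]
      have hk : (k.val:ℝ) + 1 ≤ (n:ℝ) := by exact_mod_cast k.isLt
      linarith
  have hxmono : ∀ i j : Fin n, i ≤ j → x i ≤ x j := by
    intro i j hij
    simp only [hx]
    gcongr
    exact_mod_cast hij
  have hrevx : ∀ k : Fin n, x (Fin.rev k) = 1 - x k := by
    intro k
    have hlt : k.val + 1 ≤ n := k.isLt
    simp only [hx, Fin.val_rev]
    rw [Nat.cast_sub hlt]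
    push_cast
    field_simp
    ring
  have hs : ∀ i j k l : Fin n, i ≤ j → k ≤ l →
      A (x i) (x l) + A (x j) (x k) ≤ A (x i) (x k) + A (x j) (x l) := by
    intro i j k l hij hkl
    have := hA2 (x i) (x j) (x k) (x l) (hxmem i) (hxmem j) (hxmem k) (hxmem l)
      (hxmono _ _ hij) (hxmono _ _ hkl)
    linarith
  have hmax : ∀ τ : Equiv.Perm (Fin n),
      ∑ k, A (x k) (x (τ k)) ≤ ∑ k, A (x k) (x k) :=
    fun τ => rearrange_max' x A hs τ.support.card τ le_rfl
  have hsumx : ∑ k : Fin n, x k = (n:ℝ)/2 := by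
    simp only [hx]
    rw [← Finset.sum_div, gauss_sum_fin]
    field_simp
  -- lower bound
  have e1 : ∀ k : Fin n, A (x k) (x (σ k)) = x (σ k) - A (x (Fin.rev k)) (x (σ k)) := by
    intro k
    rw [hrevx k]
    exact hinv (x k) (hxmem k) (x (σ k)) (hxmem (σ k))
  have hsσ : ∑ k, x (σ k) = (n:ℝ)/2 := by
    rw [Equiv.sum_comp σ x]; exact hsumx
  have hrein : ∑ k : Fin n, A (x (Fin.rev k)) (x (σ k))
      = ∑ k : Fin n, A (x k) (x (σ (Fin.rev k))) := by
    have h := Equiv.sum_comp (Fin.revPerm : Equiv.Perm (Fin n))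
      (fun k => A (x k) (x (σ (Fin.rev k))))
    simpa [Fin.rev_rev] using h
  have hT : ∑ k : Fin n, A (x k) (x (σ (Fin.rev k))) ≤ ∑ k, A (x k) (x k) := by
    have h := hmax ((Fin.revPerm : Equiv.Perm (Fin n)).trans σ)
    simpa using h
  have hlow : (n:ℝ)/2 - ∑ k, A (x k) (x k) ≤ ∑ k, A (x k) (x (σ k)) := by
    have hsplit : ∑ k, A (x k) (x (σ k))
        = ∑ k, x (σ k) - ∑ k, A (x (Fin.rev k)) (x (σ k)) := by
      rw [← Finset.sum_sub_distrib]
      exact Finset.sum_congr rfl (fun k _ => e1 k)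
    rw [hsplit, hsσ, hrein]
    linarith
  -- bookkeeping
  have hCAn : CA * n = ∑ k, A (x k) (x (σ k)) := by
    rw [hCA]; field_simp; rfl
  have hMAn : MA * n = ∑ k, A (x k) (x k) := by
    rw [hMA]; field_simp; rfl
  have hup' : CA ≤ MA := by
    have h := hmax σ
    rw [← hCAn, ← hMAn] at h
    exact le_of_mul_le_mul_right h hn0
  have hlo' : 1/2 - MA ≤ CA := by
    rw [← hCAn, ← hMAn] at hlow
    nlinarith
  have hd : (0:ℝ) < MA - 1/4 := by linarith
  refine ⟨⟨?_, ?_⟩, ?_, ?_⟩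
  · rw [hκ, le_div_iff₀ hd]; linarith
  · rw [hκ, div_le_one hd]; linarith
  · intro h
    subst h
    have hce : CA = MA := by rw [hCA, hMA]; simp
    rw [hκ, hce, div_self hd.ne']
  · intro hrev
    have hσx : ∀ k : Fin n, (((σ k).val:ℝ)+1)/((n:ℝ)+1) = 1 - x k := by
      intro k
      have h1 : (σ k).val + 1 = n - k.val := hrev k
      have hk : k.val ≤ n := le_of_lt k.isLt
      have h2 : ((σ k).val:ℝ) + 1 = (n:ℝ) - (k.val:ℝ) := by
        rw [show ((σ k).val:ℝ) + 1 = (((σ k).val + 1 : ℕ) : ℝ) by push_cast; ring,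
          h1, Nat.cast_sub hk]
      simp only [hx]
      rw [h2]
      field_simp
      ring
    have hterm : ∀ k : Fin n, A (x k) ((((σ k).val:ℝ)+1)/((n:ℝ)+1))
        = (1 - x k) - A (x (Fin.rev k)) (x (Fin.rev k)) := by
      intro k
      have hm : 1 - x k ∈ Icc (0:ℝ) 1 := by
        have := hxmem k; constructor <;> [linarith [this.2]; linarith [this.1]]
      rw [hσx k, hinv (x k) (hxmem k) (1 - x k) hm, hrevx k]
    have hsumrev : ∑ k : Fin n, A (x (Fin.rev k)) (x (Fin.rev k))
        = ∑ k, A (x k) (x k) :=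
      Equiv.sum_comp (Fin.revPerm : Equiv.Perm (Fin n)) (fun k => A (x k) (x k))
    have hce : CA * n = (n:ℝ)/2 - MA * n := by
      rw [hCA, hMAn]
      have : ∑ k : Fin n, A (x k) ((((σ k).val:ℝ)+1)/((n:ℝ)+1))
          = ∑ k : Fin n, ((1 - x k) - A (x (Fin.rev k)) (x (Fin.rev k))) :=
        Finset.sum_congr rfl (fun k _ => hterm k)
      rw [this, Finset.sum_sub_distrib, hsumrev, Finset.sum_sub_distrib,
        Finset.sum_const, Finset.card_univ, Fintype.card_fin, hsumx]
      field_simp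
      ring
    have hce' : CA = 1/2 - MA := by nlinarith
    rw [hκ, hce', show (1/2 - MA - 1/4 : ℝ) = -(MA - 1/4) by ring, neg_div,
      div_self hd.ne']

theorem stmt17 (n : ℕ) (hn : 1 ≤ n) (A : ℝ → ℝ → ℝ) (hA : IsCopula A)
    (hinv : IsGammaInvariant A) (σ : Equiv.Perm (Fin n))
    (MA CA κ : ℝ)
    (hMA : MA = (1/(n:ℝ)) * ∑ k : Fin n,
      A (((k.val:ℝ)+1)/((n:ℝ)+1)) (((k.val:ℝ)+1)/((n:ℝ)+1)))
    (hCA : CA = (1/(n:ℝ)) * ∑ k : Fin n,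
      A (((k.val:ℝ)+1)/((n:ℝ)+1)) ((((σ k).val:ℝ)+1)/((n:ℝ)+1)))
    (hM : MA > 1/4)
    (hκ : κ = (CA - 1/4) / (MA - 1/4)) :
    (-1 ≤ κ ∧ κ ≤ 1) ∧
    (σ = Equiv.refl (Fin n) → κ = 1) ∧
    ((∀ k : Fin n, (σ k).val + 1 = n - k.val) → κ = -1) := by
  exact stmt17_aux n hn A hA.2.2.2.2.1
    (fun u hu v hv => (hinv u hu v hv).2) σ MA CA κ hMA hCA hM hκ
end

section
/- Define E : [0,1]² → [0,1] by E(u,v) := min(u,v) if |u − v| > 1/2, E(u,v) := max(u+v−1, 0) if |u + v − 1| > 1/2, and E(u,v) := (u+v)/2 − 1/4 otherwise. Then E is a copula, E is Γ-invariant (E(u,v) = E(v,u) and E(u,v) = v − E(1−u,v) for all u,v ∈ [0,1]), and (1/3)(E(1/4,1/4) + E(2/4,2/4) + E(3/4,3/4)) = 1/4, i.e. ⟨M,E⟩_3 = 1/4. -/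
open MeasureTheory Set

/-- The biconvex form `[C, A]` where `μ` is the measure associated with `A`. -/

private lemma lemA {a₁ a₂ b₁ b₂ : ℝ} (ha : a₁ ≤ a₂) (hb : b₁ ≤ b₂) :
    0 ≤ min a₂ b₂ - min a₂ b₁ - min a₁ b₂ + min a₁ b₁ := by
  simp only [min_def]; split_ifs <;> linarith

private lemma lemB {a₁ a₂ b₁ b₂ c : ℝ} (ha : a₁ ≤ a₂) (hb : b₁ ≤ b₂) :
    0 ≤ max (a₂ + b₂ - c) 0 - max (a₂ + b₁ - c) 0 - max (a₁ + b₂ - c) 0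
        + max (a₁ + b₁ - c) 0 := by
  simp only [max_def]; split_ifs <;> linarith

private lemma keyE (E : ℝ → ℝ → ℝ)
    (hE : ∀ u v : ℝ, E u v =
      if |u - v| > 1/2 then min u v
      else if |u + v - 1| > 1/2 then max (u + v - 1) 0
      else (u + v)/2 - 1/4)
    {u v : ℝ} (hu : u ∈ Icc (0:ℝ) 1) (hv : v ∈ Icc (0:ℝ) 1) :
    E u v = (1/2) * (min (max (u - 1/2) 0) v + min (max (v - 1/2) 0) u
      + max (min u (1/2) + min v (1/2) - 1/2) 0 + max (u + v - 3/2) 0) := by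
  obtain ⟨h1, h2⟩ := hu; obtain ⟨h3, h4⟩ := hv
  rw [hE]
  split_ifs with H1 H2
  · -- |u - v| > 1/2
    rcases lt_abs.mp H1 with h | h
    · -- 1/2 < u - v
      rw [max_eq_left (show (0:ℝ) ≤ u - 1/2 by linarith),
          min_eq_right (show v ≤ u - 1/2 by linarith),
          max_eq_right (show v - 1/2 ≤ (0:ℝ) by linarith),
          min_eq_left (show (0:ℝ) ≤ u by linarith),
          min_eq_right (show (1/2:ℝ) ≤ u by linarith),
          min_eq_left (show v ≤ (1/2:ℝ) by linarith),
          max_eq_left (show (0:ℝ) ≤ 1/2 + v - 1/2 by linarith),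
          max_eq_right (show u + v - 3/2 ≤ (0:ℝ) by linarith),
          min_eq_right (show v ≤ u by linarith)]
      ring
    · -- 1/2 < v - u
      rw [max_eq_right (show u - 1/2 ≤ (0:ℝ) by linarith),
          min_eq_left (show (0:ℝ) ≤ v by linarith),
          max_eq_left (show (0:ℝ) ≤ v - 1/2 by linarith),
          min_eq_right (show u ≤ v - 1/2 by linarith),
          min_eq_left (show u ≤ (1/2:ℝ) by linarith),
          min_eq_right (show (1/2:ℝ) ≤ v by linarith),
          max_eq_left (show (0:ℝ) ≤ u + 1/2 - 1/2 by linarith),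
          max_eq_right (show u + v - 3/2 ≤ (0:ℝ) by linarith),
          min_eq_left (show u ≤ v by linarith)]
      ring
  · -- |u - v| ≤ 1/2, |u + v - 1| > 1/2
    obtain ⟨hA, hB⟩ := abs_le.mp (not_lt.mp H1)
    rcases lt_abs.mp H2 with h | h
    · -- u + v > 3/2
      rw [max_eq_left (show (0:ℝ) ≤ u - 1/2 by linarith),
          min_eq_left (show u - 1/2 ≤ v by linarith),
          max_eq_left (show (0:ℝ) ≤ v - 1/2 by linarith),
          min_eq_left (show v - 1/2 ≤ u by linarith),
          min_eq_right (show (1/2:ℝ) ≤ u by linarith),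
          min_eq_right (show (1/2:ℝ) ≤ v by linarith),
          max_eq_left (show (0:ℝ) ≤ 1/2 + 1/2 - (1/2:ℝ) by norm_num),
          max_eq_left (show (0:ℝ) ≤ u + v - 3/2 by linarith),
          max_eq_left (show (0:ℝ) ≤ u + v - 1 by linarith)]
      ring
    · -- u + v < 1/2
      rw [max_eq_right (show u - 1/2 ≤ (0:ℝ) by linarith),
          min_eq_left (show (0:ℝ) ≤ v by linarith),
          max_eq_right (show v - 1/2 ≤ (0:ℝ) by linarith),
          min_eq_left (show (0:ℝ) ≤ u by linarith),
          min_eq_left (show u ≤ (1/2:ℝ) by linarith),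
          min_eq_left (show v ≤ (1/2:ℝ) by linarith),
          max_eq_right (show u + v - 1/2 ≤ (0:ℝ) by linarith),
          max_eq_right (show u + v - 3/2 ≤ (0:ℝ) by linarith),
          max_eq_right (show u + v - 1 ≤ (0:ℝ) by linarith)]
      ring
  · -- middle region
    obtain ⟨hA, hB⟩ := abs_le.mp (not_lt.mp H1)
    obtain ⟨hC, hD⟩ := abs_le.mp (not_lt.mp H2)
    rcases le_total u (1/2 : ℝ) with hu5 | hu5 <;>
      rcases le_total v (1/2 : ℝ) with hv5 | hv5
    · rw [max_eq_right (show u - 1/2 ≤ (0:ℝ) by linarith),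
          min_eq_left (show (0:ℝ) ≤ v by linarith),
          max_eq_right (show v - 1/2 ≤ (0:ℝ) by linarith),
          min_eq_left (show (0:ℝ) ≤ u by linarith),
          min_eq_left (show u ≤ (1/2:ℝ) by linarith),
          min_eq_left (show v ≤ (1/2:ℝ) by linarith),
          max_eq_left (show (0:ℝ) ≤ u + v - 1/2 by linarith),
          max_eq_right (show u + v - 3/2 ≤ (0:ℝ) by linarith)]
      ring
    · rw [max_eq_right (show u - 1/2 ≤ (0:ℝ) by linarith),
          min_eq_left (show (0:ℝ) ≤ v by linarith),
          max_eq_left (show (0:ℝ) ≤ v - 1/2 by linarith),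
          min_eq_left (show v - 1/2 ≤ u by linarith),
          min_eq_left (show u ≤ (1/2:ℝ) by linarith),
          min_eq_right (show (1/2:ℝ) ≤ v by linarith),
          max_eq_left (show (0:ℝ) ≤ u + 1/2 - 1/2 by linarith),
          max_eq_right (show u + v - 3/2 ≤ (0:ℝ) by linarith)]
      ring
    · rw [max_eq_left (show (0:ℝ) ≤ u - 1/2 by linarith),
          min_eq_left (show u - 1/2 ≤ v by linarith),
          max_eq_right (show v - 1/2 ≤ (0:ℝ) by linarith),
          min_eq_left (show (0:ℝ) ≤ u by linarith),
          min_eq_right (show (1/2:ℝ) ≤ u by linarith),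
          min_eq_left (show v ≤ (1/2:ℝ) by linarith),
          max_eq_left (show (0:ℝ) ≤ 1/2 + v - 1/2 by linarith),
          max_eq_right (show u + v - 3/2 ≤ (0:ℝ) by linarith)]
      ring
    · rw [max_eq_left (show (0:ℝ) ≤ u - 1/2 by linarith),
          min_eq_left (show u - 1/2 ≤ v by linarith),
          max_eq_left (show (0:ℝ) ≤ v - 1/2 by linarith),
          min_eq_left (show v - 1/2 ≤ u by linarith),
          min_eq_right (show (1/2:ℝ) ≤ u by linarith),
          min_eq_right (show (1/2:ℝ) ≤ v by linarith),
          max_eq_left (show (0:ℝ) ≤ 1/2 + 1/2 - (1/2:ℝ) by norm_num),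
          max_eq_right (show u + v - 3/2 ≤ (0:ℝ) by linarith)]
      ring

set_option maxHeartbeats 1000000 in
theorem stmt18 (E : ℝ → ℝ → ℝ)
    (hE : ∀ u v : ℝ, E u v =
      if |u - v| > 1/2 then min u v
      else if |u + v - 1| > 1/2 then max (u + v - 1) 0
      else (u + v)/2 - 1/4) :
    IsCopula E ∧ IsGammaInvariant E ∧
    (1/3) * (E (1/4) (1/4) + E (2/4) (2/4) + E (3/4) (3/4)) = 1/4 := by
  refine ⟨⟨?_, ?_, ?_, ?_, ?_, ?_⟩, ?_, ?_⟩
  · -- C u 0 = 0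
    intro u hu; obtain ⟨h1, h2⟩ := hu
    rw [hE]; split_ifs with H1 H2
    all_goals simp only [gt_iff_lt, lt_abs, not_lt, abs_le, not_or] at H1
    all_goals try simp only [gt_iff_lt, lt_abs, not_lt, abs_le, not_or] at H2
    all_goals try casesm* _ ∨ _, _ ∧ _
    all_goals first
      | (simp only [min_def, max_def]; split_ifs <;> linarith)
      | linarith
  · intro v hv; obtain ⟨h1, h2⟩ := hv
    rw [hE]; split_ifs with H1 H2
    all_goals simp only [gt_iff_lt, lt_abs, not_lt, abs_le, not_or] at H1
    all_goals try simp only [gt_iff_lt, lt_abs, not_lt, abs_le, not_or] at H2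
    all_goals try casesm* _ ∨ _, _ ∧ _
    all_goals first
      | (simp only [min_def, max_def]; split_ifs <;> linarith)
      | linarith
  · intro u hu; obtain ⟨h1, h2⟩ := hu
    rw [hE]; split_ifs with H1 H2
    all_goals simp only [gt_iff_lt, lt_abs, not_lt, abs_le, not_or] at H1
    all_goals try simp only [gt_iff_lt, lt_abs, not_lt, abs_le, not_or] at H2
    all_goals try casesm* _ ∨ _, _ ∧ _
    all_goals first
      | (simp only [min_def, max_def]; split_ifs <;> linarith)
      | linarith
  · intro v hv; obtain ⟨h1, h2⟩ := hv
    rw [hE]; split_ifs with H1 H2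
    all_goals simp only [gt_iff_lt, lt_abs, not_lt, abs_le, not_or] at H1
    all_goals try simp only [gt_iff_lt, lt_abs, not_lt, abs_le, not_or] at H2
    all_goals try casesm* _ ∨ _, _ ∧ _
    all_goals first
      | (simp only [min_def, max_def]; split_ifs <;> linarith)
      | linarith
  · -- 2-increasing
    intro u₁ u₂ v₁ v₂ hu1 hu2 hv1 hv2 h12 hv
    rw [keyE E hE hu2 hv2, keyE E hE hu2 hv1, keyE E hE hu1 hv2,
        keyE E hE hu1 hv1]
    have A := lemA (max_le_max (by linarith : u₁ - 1/2 ≤ u₂ - 1/2)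
      (le_refl (0:ℝ))) hv
    have B := lemA (max_le_max (by linarith : v₁ - 1/2 ≤ v₂ - 1/2)
      (le_refl (0:ℝ))) h12
    have C3 := lemB (c := (1/2:ℝ)) (min_le_min h12 (le_refl (1/2:ℝ)))
      (min_le_min hv (le_refl (1/2:ℝ)))
    have D := lemB (c := (3/2:ℝ)) h12 hv
    -- B has grid in (v, u); rearrange via linarith
    have B' := lemA (a₁ := max (v₁ - 1/2) 0) (a₂ := max (v₂ - 1/2) 0)
      (b₁ := u₁) (b₂ := u₂)
      (max_le_max (by linarith) (le_refl (0:ℝ))) h12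
    linarith [A, B', C3, D]
  · -- range
    intro u hu v hv
    obtain ⟨h1, h2⟩ := hu; obtain ⟨h3, h4⟩ := hv
    rw [hE]; simp only [mem_Icc]
    split_ifs with H1 H2
    all_goals simp only [gt_iff_lt, lt_abs, not_lt, abs_le, not_or] at H1
    all_goals try simp only [gt_iff_lt, lt_abs, not_lt, abs_le, not_or] at H2
    all_goals try casesm* _ ∨ _, _ ∧ _
    all_goals constructor
    all_goals first
      | (simp only [min_def, max_def]; split_ifs <;> linarith)
      | linarith
  · -- Gamma invariance
    intro u hu v hv
    obtain ⟨h1, h2⟩ := hu; obtain ⟨h3, h4⟩ := hv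
    constructor
    · rw [hE u v, hE v u, abs_sub_comm v u, min_comm v u,
          show v + u - 1 = u + v - 1 from by ring,
          show v + u = u + v from by ring]
    · rw [hE u v, hE (1-u) v,
          show (1 - u) - v = -(u + v - 1) from by ring, abs_neg,
          show (1 - u) + v - 1 = -(u - v) from by ring, abs_neg]
      split_ifs with H1 H2 H3 H4 H5
      all_goals try simp only [gt_iff_lt, lt_abs, not_lt, abs_le, not_or] at H1
      all_goals try simp only [gt_iff_lt, lt_abs, not_lt, abs_le, not_or] at H2
      all_goals try simp only [gt_iff_lt, lt_abs, not_lt, abs_le, not_or] at H3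
      all_goals try simp only [gt_iff_lt, lt_abs, not_lt, abs_le, not_or] at H4
      all_goals try simp only [gt_iff_lt, lt_abs, not_lt, abs_le, not_or] at H5
      all_goals try casesm* _ ∨ _, _ ∧ _
      all_goals first
        | (simp only [min_def, max_def]; split_ifs <;> linarith)
        | linarith
  · -- numeric identity
    have e1 : E (1/4) (1/4) = 0 := by
      rw [hE, if_neg (by simp only [gt_iff_lt, not_lt, abs_le]; norm_num),
          if_neg (by simp only [gt_iff_lt, not_lt, abs_le]; norm_num)]
      norm_num
    have e2 : E (2/4) (2/4) = 1/4 := by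
      rw [hE, if_neg (by simp only [gt_iff_lt, not_lt, abs_le]; norm_num),
          if_neg (by simp only [gt_iff_lt, not_lt, abs_le]; norm_num)]
      norm_num
    have e3 : E (3/4) (3/4) = 1/2 := by
      rw [hE, if_neg (by simp only [gt_iff_lt, not_lt, abs_le]; norm_num),
          if_neg (by simp only [gt_iff_lt, not_lt, abs_le]; norm_num)]
      norm_num
    rw [e1, e2, e3]; norm_num
end

section
/- Let f : ℝ² → [0,∞) be a measurable function with ∫_{ℝ²} f dλ² = 1 and f(x₁,x₂) = f(|x₁|,|x₂|) for all (x₁,x₂) ∈ ℝ². Define F(x₁,x₂) := ∫_{(−∞,x₁]×(−∞,x₂]} f dλ², F₁(x₁) := ∫_{(−∞,x₁]×ℝ} f dλ², F₂(x₂) := ∫_{ℝ×(−∞,x₂]} f dλ². Let C be a copula such that C(F₁(x₁), F₂(x₂)) = F(x₁,x₂) for all (x₁,x₂) ∈ ℝ², and assume F₁ and F₂ are surjective onto [0,1]. Then C is Γ^ν-invariant: C(u,v) = v − C(1−u, v) and C(u,v) = u − C(u, 1−v) for all u,v ∈ [0,1]. -/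
open MeasureTheory Set

private lemma null_vline (a : ℝ) : (volume : Measure (ℝ × ℝ)) ({a} ×ˢ (univ : Set ℝ)) = 0 := by
  rw [Measure.volume_eq_prod, Measure.prod_prod]
  simp

private lemma null_hline (a : ℝ) : (volume : Measure (ℝ × ℝ)) ((univ : Set ℝ) ×ˢ {a}) = 0 := by
  rw [Measure.volume_eq_prod, Measure.prod_prod]
  simp


theorem stmt19 (f : ℝ × ℝ → ℝ) (hf : Measurable f) (hf0 : ∀ p, 0 ≤ f p)
    (hf1 : (∫ p, f p) = 1)
    (hsym : ∀ x₁ x₂ : ℝ, f (x₁, x₂) = f (|x₁|, |x₂|))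
    (C : ℝ → ℝ → ℝ) (hC : IsCopula C)
    (F : ℝ → ℝ → ℝ) (hF : ∀ x₁ x₂ : ℝ, F x₁ x₂ = ∫ p in Iic x₁ ×ˢ Iic x₂, f p)
    (F₁ : ℝ → ℝ) (hF₁ : ∀ x₁ : ℝ, F₁ x₁ = ∫ p in Iic x₁ ×ˢ (univ : Set ℝ), f p)
    (F₂ : ℝ → ℝ) (hF₂ : ∀ x₂ : ℝ, F₂ x₂ = ∫ p in (univ : Set ℝ) ×ˢ Iic x₂, f p)
    (hCF : ∀ x₁ x₂ : ℝ, C (F₁ x₁) (F₂ x₂) = F x₁ x₂)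
    (hsurj1 : ∀ u ∈ Icc (0:ℝ) 1, ∃ x, F₁ x = u)
    (hsurj2 : ∀ v ∈ Icc (0:ℝ) 1, ∃ x, F₂ x = v) :
    ∀ u ∈ Icc (0:ℝ) 1, ∀ v ∈ Icc (0:ℝ) 1,
      C u v = v - C (1 - u) v ∧ C u v = u - C u (1 - v) := by
  -- f is integrable
  have hfi : Integrable f := by
    by_contra h
    rw [integral_undef h] at hf1
    norm_num at hf1
  have hfeven1 : ∀ p : ℝ × ℝ, f (-p.1, p.2) = f p := by
    intro p
    rw [hsym, abs_neg, ← hsym]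
  have hfeven2 : ∀ p : ℝ × ℝ, f (p.1, -p.2) = f p := by
    intro p
    rw [hsym, abs_neg, ← hsym]
  -- measure preserving reflections
  have hmp1 : MeasurePreserving (fun p : ℝ × ℝ => (-p.1, p.2)) volume volume := by
    rw [Measure.volume_eq_prod]
    exact (Measure.measurePreserving_neg volume).prod (MeasurePreserving.id volume)
  have hmp2 : MeasurePreserving (fun p : ℝ × ℝ => (p.1, -p.2)) volume volume := by
    rw [Measure.volume_eq_prod]
    exact (MeasurePreserving.id volume).prod (Measure.measurePreserving_neg volume)
  have hemb1 : MeasurableEmbedding (fun p : ℝ × ℝ => (-p.1, p.2)) :=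
    (MeasurableEquiv.prodCongr (MeasurableEquiv.neg ℝ) (MeasurableEquiv.refl ℝ)).measurableEmbedding
  have hemb2 : MeasurableEmbedding (fun p : ℝ × ℝ => (p.1, -p.2)) :=
    (MeasurableEquiv.prodCongr (MeasurableEquiv.refl ℝ) (MeasurableEquiv.neg ℝ)).measurableEmbedding
  -- reflection of set integrals, first coordinate
  have key1 : ∀ (a : ℝ) (S : Set ℝ), MeasurableSet S →
      (∫ p in Iic (-a) ×ˢ S, f p) = (∫ p in (univ : Set ℝ) ×ˢ S, f p) - ∫ p in Iic a ×ˢ S, f p := by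
    intro a S hS
    have h1 : (∫ p in Iic (-a) ×ˢ S, f p) = ∫ p in Ici a ×ˢ S, f p := by
      have := hmp1.setIntegral_preimage_emb hemb1 f (Iic (-a) ×ˢ S)
      rw [← this]
      have hpre : (fun p : ℝ × ℝ => (-p.1, p.2)) ⁻¹' (Iic (-a) ×ˢ S) = Ici a ×ˢ S := by
        ext p
        simp only [mem_preimage, mem_prod, mem_Iic, mem_Ici]
        constructor
        · rintro ⟨h1, h2⟩; exact ⟨by linarith, h2⟩
        · rintro ⟨h1, h2⟩; exact ⟨by linarith, h2⟩
      rw [hpre]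
      exact setIntegral_congr_fun ((measurableSet_Ici).prod hS) (fun p _ => hfeven1 p)
    have h2 : (∫ p in Ici a ×ˢ S, f p) = ∫ p in Ioi a ×ˢ S, f p := by
      apply setIntegral_congr_set
      rw [MeasureTheory.ae_eq_set]
      constructor
      · refine measure_mono_null ?_ (null_vline a)
        rintro ⟨x, y⟩ ⟨⟨hx, hy⟩, hn⟩
        simp only [mem_prod, mem_Ioi] at hn
        have h' : ¬ a < x := fun h => hn ⟨h, hy⟩
        exact ⟨mem_singleton_iff.mpr (le_antisymm (not_lt.mp h') hx), trivial⟩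
      · refine measure_mono_null ?_ (measure_empty (μ := (volume : Measure (ℝ × ℝ))))
        rintro ⟨x, y⟩ ⟨⟨hx, hy⟩, hn⟩
        exact absurd ⟨Ioi_subset_Ici_self hx, hy⟩ hn
    have h3 : (∫ p in (univ : Set ℝ) ×ˢ S, f p)
        = (∫ p in Iic a ×ˢ S, f p) + ∫ p in Ioi a ×ˢ S, f p := by
      rw [← setIntegral_union]
      · congr 1
        rw [← Set.union_prod, Iic_union_Ioi]
      · exact Set.disjoint_prod.mpr (Or.inl (Set.Iic_disjoint_Ioi le_rfl))
      · exact measurableSet_Ioi.prod hS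
      · exact hfi.integrableOn
      · exact hfi.integrableOn
    rw [h1, h2, h3]; ring
  -- reflection of set integrals, second coordinate
  have key2 : ∀ (a : ℝ) (S : Set ℝ), MeasurableSet S →
      (∫ p in S ×ˢ Iic (-a), f p) = (∫ p in S ×ˢ (univ : Set ℝ), f p) - ∫ p in S ×ˢ Iic a, f p := by
    intro a S hS
    have h1 : (∫ p in S ×ˢ Iic (-a), f p) = ∫ p in S ×ˢ Ici a, f p := by
      have := hmp2.setIntegral_preimage_emb hemb2 f (S ×ˢ Iic (-a))
      rw [← this]
      have hpre : (fun p : ℝ × ℝ => (p.1, -p.2)) ⁻¹' (S ×ˢ Iic (-a)) = S ×ˢ Ici a := by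
        ext p
        simp only [mem_preimage, mem_prod, mem_Iic, mem_Ici]
        constructor
        · rintro ⟨h1, h2⟩; exact ⟨h1, by linarith⟩
        · rintro ⟨h1, h2⟩; exact ⟨h1, by linarith⟩
      rw [hpre]
      exact setIntegral_congr_fun (hS.prod measurableSet_Ici) (fun p _ => hfeven2 p)
    have h2 : (∫ p in S ×ˢ Ici a, f p) = ∫ p in S ×ˢ Ioi a, f p := by
      apply setIntegral_congr_set
      rw [MeasureTheory.ae_eq_set]
      constructor
      · refine measure_mono_null ?_ (null_hline a)
        rintro ⟨x, y⟩ ⟨⟨hx, hy⟩, hn⟩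
        simp only [mem_prod, mem_Ioi] at hn
        have h' : ¬ a < y := fun h => hn ⟨hx, h⟩
        exact ⟨trivial, mem_singleton_iff.mpr (le_antisymm (not_lt.mp h') hy)⟩
      · refine measure_mono_null ?_ (measure_empty (μ := (volume : Measure (ℝ × ℝ))))
        rintro ⟨x, y⟩ ⟨⟨hx, hy⟩, hn⟩
        exact absurd ⟨hx, Ioi_subset_Ici_self hy⟩ hn
    have h3 : (∫ p in S ×ˢ (univ : Set ℝ), f p)
        = (∫ p in S ×ˢ Iic a, f p) + ∫ p in S ×ˢ Ioi a, f p := by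
      rw [← setIntegral_union]
      · congr 1
        rw [← Set.prod_union, Iic_union_Ioi]
      · exact Set.disjoint_prod.mpr (Or.inr (Set.Iic_disjoint_Ioi le_rfl))
      · exact hS.prod measurableSet_Ioi
      · exact hfi.integrableOn
      · exact hfi.integrableOn
    rw [h1, h2, h3]; ring
  have htotal : (∫ p in (univ : Set ℝ) ×ˢ (univ : Set ℝ), f p) = 1 := by
    rw [Set.univ_prod_univ, setIntegral_univ, hf1]
  have hF₁neg : ∀ x : ℝ, F₁ (-x) = 1 - F₁ x := by
    intro x
    rw [hF₁, hF₁, key1 x univ MeasurableSet.univ, htotal]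
  have hF₂neg : ∀ x : ℝ, F₂ (-x) = 1 - F₂ x := by
    intro x
    rw [hF₂, hF₂, key2 x univ MeasurableSet.univ, htotal]
  have hFneg1 : ∀ x₁ x₂ : ℝ, F (-x₁) x₂ = F₂ x₂ - F x₁ x₂ := by
    intro x₁ x₂
    rw [hF, hF, key1 x₁ (Iic x₂) measurableSet_Iic, hF₂]
  have hFneg2 : ∀ x₁ x₂ : ℝ, F x₁ (-x₂) = F₁ x₁ - F x₁ x₂ := by
    intro x₁ x₂
    rw [hF, hF, key2 x₂ (Iic x₁) measurableSet_Iic, hF₁]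
  intro u hu v hv
  obtain ⟨x₁, hx₁⟩ := hsurj1 u hu
  obtain ⟨x₂, hx₂⟩ := hsurj2 v hv
  constructor
  · have e1 : C (1 - u) v = C (F₁ (-x₁)) (F₂ x₂) := by rw [hF₁neg, hx₁, hx₂]
    have e2 : C u v = C (F₁ x₁) (F₂ x₂) := by rw [hx₁, hx₂]
    rw [e1, e2, hCF, hCF, hFneg1, ← hx₂]
    ring
  · have e1 : C u (1 - v) = C (F₁ x₁) (F₂ (-x₂)) := by rw [hF₂neg, hx₁, hx₂]
    have e2 : C u v = C (F₁ x₁) (F₂ x₂) := by rw [hx₁, hx₂]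
    rw [e1, e2, hCF, hCF, hFneg2, ← hx₁]
    ring
end
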